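/- Let t ≥ 1 and k ≥ 1 be integers and x ≥ 2. Then ∑_{1 ≤ D ≤ x} τ(D)^{2k} · gcd(D, t)/D ≪ τ(t)^{2k+1} · (log x)^{4^k}, where the implied constant depends only on k. -/

import Mathlib

open Finset

-- τ is submultiplicative
lemma tau_mul_le {m n : ℕ} (hm : m ≠ 0) (hn : n ≠ 0) :
    (m * n).divisors.card ≤ m.divisors.card * n.divisors.card := by
  rw [← Finset.card_product]
  apply Finset.card_le_card_of_injOn (fun d => (Nat.gcd d m, d / Nat.gcd d m))
  · intro d hd
    rw [Finset.mem_coe, Nat.mem_divisors] at hd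
    have hd0 : d ≠ 0 := by rintro rfl; exact hd.2 (Nat.eq_zero_of_zero_dvd hd.1)
    have hg : Nat.gcd d m ∣ d := Nat.gcd_dvd_left d m
    have hg0 : Nat.gcd d m ≠ 0 := Nat.gcd_ne_zero_left hd0
    have he0 : d / Nat.gcd d m ≠ 0 := by
      exact Nat.div_ne_zero_iff.mpr ⟨hg0, Nat.le_of_dvd (Nat.pos_of_ne_zero hd0) hg⟩
    refine Finset.mem_product.mpr ⟨Nat.mem_divisors.mpr ⟨Nat.gcd_dvd_right d m, hm⟩,
      Nat.mem_divisors.mpr ⟨?_, hn⟩⟩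
    rw [← Nat.factorization_le_iff_dvd he0 hn, Nat.factorization_div hg,
      Nat.factorization_gcd hd0 hm]
    have hdle : d.factorization ≤ m.factorization + n.factorization := by
      rw [← Nat.factorization_mul hm hn, Nat.factorization_le_iff_dvd hd0 (mul_ne_zero hm hn)]
      exact hd.1
    intro p
    have := hdle p
    simp only [Finsupp.add_apply] at this
    simp only [Finsupp.tsub_apply, Finsupp.inf_apply]
    omega
  · intro a ha b hb hab
    simp only [Prod.mk.injEq] at hab
    have ha' : Nat.gcd a m ∣ a := Nat.gcd_dvd_left a m
    have hb' : Nat.gcd b m ∣ b := Nat.gcd_dvd_left b m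
    calc a = Nat.gcd a m * (a / Nat.gcd a m) := (Nat.mul_div_cancel' ha').symm
    _ = Nat.gcd b m * (b / Nat.gcd b m) := by rw [hab.2, hab.1]
    _ = b := Nat.mul_div_cancel' hb'

lemma card_antidiag (n : ℕ) : n.divisorsAntidiagonal.card = n.divisors.card := by
  rw [← Nat.image_fst_divisorsAntidiagonal]
  refine (Finset.card_image_of_injOn ?_).symm
  intro p hp q hq hpq
  simp only [Finset.mem_coe, Nat.mem_divisorsAntidiagonal] at hp hq
  have h1 : p.1 ≠ 0 := by rintro h; rw [h, zero_mul] at hp; exact hp.2 hp.1.symm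
  have : p.1 * p.2 = p.1 * q.2 := by rw [hp.1, hpq, hq.1]
  have h2 : p.2 = q.2 := Nat.eq_of_mul_eq_mul_left (Nat.pos_of_ne_zero h1) this
  exact Prod.ext hpq h2

-- recursion step : S_{m+1}(N) ≤ S_m(N)^2
lemma step_bound (m N : ℕ) :
    ∑ n ∈ Finset.Icc 1 N, (n.divisors.card : ℝ) ^ (m + 1) / n ≤
      (∑ n ∈ Finset.Icc 1 N, (n.divisors.card : ℝ) ^ m / n) ^ 2 := by
  set g : ℕ × ℕ → ℝ := fun p =>
    (p.1.divisors.card : ℝ) ^ m / p.1 * ((p.2.divisors.card : ℝ) ^ m / p.2) with hg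
  have hgnonneg : ∀ p : ℕ × ℕ, 0 ≤ g p := by
    intro p; apply mul_nonneg <;> positivity
  have h1 : ∀ n ∈ Finset.Icc 1 N, (n.divisors.card : ℝ) ^ (m + 1) / n ≤
      ∑ p ∈ n.divisorsAntidiagonal, g p := by
    intro n hn
    rw [Finset.mem_Icc] at hn
    have hn0 : n ≠ 0 := by omega
    calc (n.divisors.card : ℝ) ^ (m + 1) / n
        = ∑ _p ∈ n.divisorsAntidiagonal, (n.divisors.card : ℝ) ^ m / n := by
          rw [Finset.sum_const, card_antidiag, nsmul_eq_mul, pow_succ]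
          ring
      _ ≤ ∑ p ∈ n.divisorsAntidiagonal, g p := by
          refine Finset.sum_le_sum fun p hp => ?_
          obtain ⟨hpn, -⟩ := Nat.mem_divisorsAntidiagonal.mp hp
          have hp1 : p.1 ≠ 0 := Nat.left_ne_zero_of_mem_divisorsAntidiagonal hp
          have hp2 : p.2 ≠ 0 := Nat.right_ne_zero_of_mem_divisorsAntidiagonal hp
          have htau : (n.divisors.card : ℝ) ≤ (p.1.divisors.card : ℝ) * p.2.divisors.card := by
            rw [← hpn]; exact_mod_cast tau_mul_le hp1 hp2
          have : (n.divisors.card : ℝ) ^ m ≤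
              ((p.1.divisors.card : ℝ) * p.2.divisors.card) ^ m :=
            pow_le_pow_left₀ (by positivity) htau m
          have heq : g p = ((p.1.divisors.card : ℝ) * p.2.divisors.card) ^ m / n := by
            simp only [hg, div_mul_div_comm, ← mul_pow]
            rw [← hpn]
            push_cast
            ring
          rw [heq]
          gcongr
  calc ∑ n ∈ Finset.Icc 1 N, (n.divisors.card : ℝ) ^ (m + 1) / n
      ≤ ∑ n ∈ Finset.Icc 1 N, ∑ p ∈ n.divisorsAntidiagonal, g p := Finset.sum_le_sum h1
    _ = ∑ q ∈ (Finset.Icc 1 N).sigma (fun n => n.divisorsAntidiagonal), g q.2 := by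
        rw [Finset.sum_sigma]
    _ = ∑ p ∈ ((Finset.Icc 1 N).sigma (fun n => n.divisorsAntidiagonal)).image Sigma.snd,
          g p := by
        refine (Finset.sum_image ?_).symm
        rintro ⟨n, p⟩ hp ⟨n', p'⟩ hp' (h : p = p')
        simp only [Finset.mem_coe, Finset.mem_sigma, Nat.mem_divisorsAntidiagonal] at hp hp'
        have : n = n' := by rw [← hp.2.1, ← hp'.2.1, h]
        subst this; subst h; rfl
    _ ≤ ∑ p ∈ Finset.Icc 1 N ×ˢ Finset.Icc 1 N, g p := by
        refine Finset.sum_le_sum_of_subset_of_nonneg ?_ (fun p _ _ => hgnonneg p)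
        intro p hp
        simp only [Finset.mem_image, Finset.mem_sigma, Nat.mem_divisorsAntidiagonal] at hp
        obtain ⟨⟨n, q⟩, ⟨hn, hq, hn0⟩, rfl⟩ := hp
        rw [Finset.mem_Icc] at hn
        have h1 : q.1 ≠ 0 := by rintro h; rw [h, zero_mul] at hq; exact hn0 hq.symm
        have h2 : q.2 ≠ 0 := by rintro h; rw [h, mul_zero] at hq; exact hn0 hq.symm
        refine Finset.mem_product.mpr ⟨Finset.mem_Icc.mpr ⟨Nat.pos_of_ne_zero h1, ?_⟩,
          Finset.mem_Icc.mpr ⟨Nat.pos_of_ne_zero h2, ?_⟩⟩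
        · calc q.1 ≤ q.1 * q.2 := Nat.le_mul_of_pos_right _ (Nat.pos_of_ne_zero h2)
            _ ≤ N := hq ▸ hn.2
        · calc q.2 ≤ q.1 * q.2 := Nat.le_mul_of_pos_left _ (Nat.pos_of_ne_zero h1)
            _ ≤ N := hq ▸ hn.2
    _ = (∑ n ∈ Finset.Icc 1 N, (n.divisors.card : ℝ) ^ m / n) ^ 2 := by
        rw [sq, Finset.sum_mul_sum, Finset.sum_product]

lemma S_bound (m N : ℕ) :
    ∑ n ∈ Finset.Icc 1 N, (n.divisors.card : ℝ) ^ m / n ≤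
      (∑ n ∈ Finset.Icc 1 N, (1 : ℝ) / n) ^ (2 ^ m) := by
  induction m with
  | zero => simp
  | succ m ih =>
    have hnn : (0:ℝ) ≤ ∑ n ∈ Finset.Icc 1 N, (n.divisors.card : ℝ) ^ m / n :=
      Finset.sum_nonneg fun n _ => by positivity
    calc ∑ n ∈ Finset.Icc 1 N, (n.divisors.card : ℝ) ^ (m + 1) / n
        ≤ (∑ n ∈ Finset.Icc 1 N, (n.divisors.card : ℝ) ^ m / n) ^ 2 := step_bound m N
      _ ≤ ((∑ n ∈ Finset.Icc 1 N, (1 : ℝ) / n) ^ (2 ^ m)) ^ 2 := by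
          exact pow_le_pow_left₀ hnn ih 2
      _ = (∑ n ∈ Finset.Icc 1 N, (1 : ℝ) / n) ^ (2 ^ (m + 1)) := by
          rw [← pow_mul, pow_succ]

theorem divisor_gcd_sum_bound (k : ℕ) (hk : 1 ≤ k) :
    ∃ C : ℝ, 0 < C ∧ ∀ t : ℕ, 1 ≤ t → ∀ x : ℝ, 2 ≤ x →
      ∑ D ∈ Finset.Icc 1 ⌊x⌋₊,
          ((D.divisors.card : ℝ)) ^ (2 * k) * (Nat.gcd D t : ℝ) / (D : ℝ) ≤
        C * ((t.divisors.card : ℝ)) ^ (2 * k + 1) * Real.log x ^ (4 ^ k) := by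
  set c0 : ℝ := 1 / Real.log 2 + 1 with hc0
  have hlog2 : (0:ℝ) < Real.log 2 := Real.log_pos (by norm_num)
  have hc0pos : 0 < c0 := by positivity
  refine ⟨c0 ^ (4 ^ k), by positivity, ?_⟩
  intro t ht x hx
  have ht0 : t ≠ 0 := by omega
  set N := ⌊x⌋₊ with hN
  have hN1 : 1 ≤ N := Nat.le_floor (by exact_mod_cast (by linarith : (1:ℝ) ≤ x))
  have hlogx : 0 < Real.log x := Real.log_pos (by linarith)
  -- harmonic bound
  have hH : ∑ n ∈ Finset.Icc 1 N, (1 : ℝ) / n ≤ c0 * Real.log x := by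
    have h1 : ∑ n ∈ Finset.Icc 1 N, (1 : ℝ) / n = (harmonic N : ℝ) := by
      rw [harmonic_eq_sum_Icc]
      push_cast
      simp [one_div]
    rw [h1]
    have h2 : (harmonic N : ℝ) ≤ 1 + Real.log x := harmonic_floor_le_one_add_log x (by linarith)
    have h3 : (1:ℝ) + Real.log x ≤ c0 * Real.log x := by
      have hlx : Real.log 2 ≤ Real.log x := Real.log_le_log (by norm_num) hx
      rw [hc0, add_mul, one_mul]
      have : (1:ℝ) ≤ 1 / Real.log 2 * Real.log x := by
        rw [div_mul_eq_mul_div, one_mul, le_div_iff₀ hlog2, one_mul]; exact hlx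
      linarith
    linarith
  have hSnn : ∀ n : ℕ, (0:ℝ) ≤ (n.divisors.card : ℝ) ^ (2 * k) / n := fun n => by positivity
  -- S := ∑ τ^{2k}/n bound
  have hS : ∑ n ∈ Finset.Icc 1 N, (n.divisors.card : ℝ) ^ (2 * k) / n ≤
      (c0 * Real.log x) ^ (4 ^ k) := by
    have := S_bound (2 * k) N
    have hHnn : (0:ℝ) ≤ ∑ n ∈ Finset.Icc 1 N, (1 : ℝ) / n :=
      Finset.sum_nonneg fun n _ => by positivity
    calc ∑ n ∈ Finset.Icc 1 N, (n.divisors.card : ℝ) ^ (2 * k) / n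
        ≤ (∑ n ∈ Finset.Icc 1 N, (1 : ℝ) / n) ^ (2 ^ (2 * k)) := this
      _ ≤ (c0 * Real.log x) ^ (2 ^ (2 * k)) := pow_le_pow_left₀ hHnn hH _
      _ = (c0 * Real.log x) ^ (4 ^ k) := by rw [pow_mul]; norm_num
  -- main splitting
  set F : ℕ × ℕ → ℝ := fun p =>
    (p.1.divisors.card : ℝ) ^ (2 * k) * ((p.2.divisors.card : ℝ) ^ (2 * k) / p.2) with hF
  have hFnn : ∀ p : ℕ × ℕ, 0 ≤ F p := fun p => by
    apply mul_nonneg; positivity; exact hSnn p.2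
  set e : ℕ → ℕ × ℕ := fun D => (Nat.gcd D t, D / Nat.gcd D t) with he
  have hmain : ∑ D ∈ Finset.Icc 1 N,
      ((D.divisors.card : ℝ)) ^ (2 * k) * (Nat.gcd D t : ℝ) / (D : ℝ) ≤
      ∑ p ∈ t.divisors ×ˢ Finset.Icc 1 N, F p := by
    have hterm : ∀ D ∈ Finset.Icc 1 N,
        ((D.divisors.card : ℝ)) ^ (2 * k) * (Nat.gcd D t : ℝ) / (D : ℝ) ≤ F (e D) := by
      intro D hD
      rw [Finset.mem_Icc] at hD
      have hD0 : D ≠ 0 := by omega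
      set s := Nat.gcd D t with hs
      have hsD : s ∣ D := Nat.gcd_dvd_left D t
      have hs0 : s ≠ 0 := Nat.gcd_ne_zero_left hD0
      set d := D / s with hd
      have hDsd : D = s * d := (Nat.mul_div_cancel' hsD).symm
      have hd0 : d ≠ 0 := by
        rintro h; rw [h, mul_zero] at hDsd; exact hD0 hDsd
      have htau : (D.divisors.card : ℝ) ≤ (s.divisors.card : ℝ) * d.divisors.card := by
        rw [hDsd]; exact_mod_cast tau_mul_le hs0 hd0
      have hspos : (0:ℝ) < s := by exact_mod_cast Nat.pos_of_ne_zero hs0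
      have hdpos : (0:ℝ) < d := by exact_mod_cast Nat.pos_of_ne_zero hd0
      have hDpos : (0:ℝ) < D := by exact_mod_cast Nat.pos_of_ne_zero hD0
      calc ((D.divisors.card : ℝ)) ^ (2 * k) * (s : ℝ) / (D : ℝ)
          ≤ ((s.divisors.card : ℝ) * d.divisors.card) ^ (2 * k) * (s : ℝ) / (D : ℝ) := by
            exact div_le_div_of_nonneg_right (mul_le_mul_of_nonneg_right
              (pow_le_pow_left₀ (Nat.cast_nonneg _) htau _) hspos.le) hDpos.le
        _ = F (e D) := by
            have hFe : F (e D) = (s.divisors.card : ℝ) ^ (2 * k) *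
                ((d.divisors.card : ℝ) ^ (2 * k) / d) := by
              simp only [hF, he, ← hs, ← hd]
            rw [hFe, hDsd]
            push_cast
            rw [mul_pow]
            rw [← div_div, mul_div_cancel_right₀ _ hspos.ne']
            ring
    calc ∑ D ∈ Finset.Icc 1 N,
        ((D.divisors.card : ℝ)) ^ (2 * k) * (Nat.gcd D t : ℝ) / (D : ℝ)
        ≤ ∑ D ∈ Finset.Icc 1 N, F (e D) := Finset.sum_le_sum hterm
      _ = ∑ p ∈ (Finset.Icc 1 N).image e, F p := by
          refine (Finset.sum_image ?_).symm
          intro a ha b hb hab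
          rw [Finset.mem_coe, Finset.mem_Icc] at ha hb
          have ha0 : a ≠ 0 := by omega
          have hb0 : b ≠ 0 := by omega
          simp only [he, Prod.mk.injEq] at hab
          calc a = Nat.gcd a t * (a / Nat.gcd a t) := (Nat.mul_div_cancel' (Nat.gcd_dvd_left a t)).symm
            _ = Nat.gcd b t * (b / Nat.gcd b t) := by rw [hab.2, hab.1]
            _ = b := Nat.mul_div_cancel' (Nat.gcd_dvd_left b t)
      _ ≤ ∑ p ∈ t.divisors ×ˢ Finset.Icc 1 N, F p := by
          refine Finset.sum_le_sum_of_subset_of_nonneg ?_ (fun p _ _ => hFnn p)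
          intro p hp
          simp only [Finset.mem_image] at hp
          obtain ⟨D, hD, rfl⟩ := hp
          rw [Finset.mem_Icc] at hD
          have hD0 : D ≠ 0 := by omega
          have hs0 : Nat.gcd D t ≠ 0 := Nat.gcd_ne_zero_left hD0
          refine Finset.mem_product.mpr ⟨Nat.mem_divisors.mpr ⟨Nat.gcd_dvd_right D t, ht0⟩,
            Finset.mem_Icc.mpr ⟨?_, ?_⟩⟩
          · simp only [he]
            exact Nat.pos_of_ne_zero (Nat.div_ne_zero_iff.mpr ⟨hs0,
              Nat.le_of_dvd (Nat.pos_of_ne_zero hD0) (Nat.gcd_dvd_left D t)⟩)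
          · exact le_trans (Nat.div_le_self D _) hD.2
  -- sum over product
  have hprod : ∑ p ∈ t.divisors ×ˢ Finset.Icc 1 N, F p ≤
      (t.divisors.card : ℝ) ^ (2 * k + 1) *
        ∑ n ∈ Finset.Icc 1 N, (n.divisors.card : ℝ) ^ (2 * k) / n := by
    rw [Finset.sum_product]
    simp only [hF]
    rw [← Finset.sum_mul_sum]
    have hτ : ∑ s ∈ t.divisors, (s.divisors.card : ℝ) ^ (2 * k) ≤
        (t.divisors.card : ℝ) ^ (2 * k + 1) := by
      calc ∑ s ∈ t.divisors, (s.divisors.card : ℝ) ^ (2 * k)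
          ≤ ∑ _s ∈ t.divisors, (t.divisors.card : ℝ) ^ (2 * k) := by
            refine Finset.sum_le_sum fun s hs => ?_
            have : s.divisors ⊆ t.divisors :=
              Nat.divisors_subset_of_dvd ht0 (Nat.mem_divisors.mp hs).1
            exact pow_le_pow_left₀ (by positivity)
              (by exact_mod_cast Finset.card_le_card this) _
        _ = (t.divisors.card : ℝ) ^ (2 * k + 1) := by
            rw [Finset.sum_const, nsmul_eq_mul, pow_succ]; ring
    have hSnn' : (0:ℝ) ≤ ∑ n ∈ Finset.Icc 1 N, (n.divisors.card : ℝ) ^ (2 * k) / n :=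
      Finset.sum_nonneg fun n _ => hSnn n
    exact mul_le_mul_of_nonneg_right hτ hSnn'
  calc ∑ D ∈ Finset.Icc 1 N,
      ((D.divisors.card : ℝ)) ^ (2 * k) * (Nat.gcd D t : ℝ) / (D : ℝ)
      ≤ (t.divisors.card : ℝ) ^ (2 * k + 1) *
          ∑ n ∈ Finset.Icc 1 N, (n.divisors.card : ℝ) ^ (2 * k) / n := hmain.trans hprod
    _ ≤ (t.divisors.card : ℝ) ^ (2 * k + 1) * (c0 * Real.log x) ^ (4 ^ k) := by
        exact mul_le_mul_of_nonneg_left hS (by positivity)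
    _ = c0 ^ (4 ^ k) * (t.divisors.card : ℝ) ^ (2 * k + 1) * Real.log x ^ (4 ^ k) := by
        rw [mul_pow]; ring
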